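/- Let ϱ > 1 and set r = ϱ + √(ϱ²−1) and t_ϱ = (1/(2ϱ−1−r))·log((r+1−2ϱ)/(4ϱr(ϱ−1)+r+1−2ϱ)). Then for all real numbers a, b, c > 0 with b/√(ac) = ϱ and every continuously differentiable L : [0,∞) → ℝ satisfying (DI) with L(0) ≤ √(c/a)·(2ϱ−1), one has L(t) ≤ √(c/a)·(1/(2ϱ−1)) for every t ≥ t_ϱ/√(ac). -/

import Mathlib

private lemma aux_hE (e d n p m : ℝ) (hd : d ≠ 0) :
    e * m * (n / d) + e * ((p * d - n * -p) / d ^ 2)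
      = e / d ^ 2 * (m * n * d + p * (d + n)) := by
  field_simp
  ring

private lemma aux_hE2 (m a' n d p : ℝ) (ha : a' ≠ 0) :
    m * n * d + p * (m / a') = m / a' * (a' * n * d + p) := by
  field_simp

set_option maxHeartbeats 2000000 in
/-- With `r = ϱ + √(ϱ²-1)` and the explicit time
`tϱ = (1/(2ϱ-1-r))·log((r+1-2ϱ)/(4ϱr(ϱ-1)+r+1-2ϱ))`, every continuously
differentiable solution of (DI) with `b/√(ac) = ϱ` and `L 0 ≤ √(c/a)*(2ϱ-1)`
satisfies `L t ≤ √(c/a)*(1/(2ϱ-1))` for all `t ≥ tϱ/√(ac)`. -/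
theorem stmt2 (ϱ : ℝ) (hϱ : 1 < ϱ)
    (r : ℝ) (hr : r = ϱ + Real.sqrt (ϱ ^ 2 - 1))
    (tϱ : ℝ)
    (htϱ : tϱ = (1 / (2 * ϱ - 1 - r)) *
      Real.log ((r + 1 - 2 * ϱ) / (4 * ϱ * r * (ϱ - 1) + r + 1 - 2 * ϱ)))
    (a b c : ℝ) (ha : 0 < a) (hb : 0 < b) (hc : 0 < c)
    (hϱdef : b / Real.sqrt (a * c) = ϱ)
    (L L' : ℝ → ℝ)
    (hderiv : ∀ t ∈ Set.Ici (0 : ℝ), HasDerivAt L (L' t) t)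
    (hcont : ContinuousOn L' (Set.Ici 0))
    (hDI : ∀ t ∈ Set.Ici (0 : ℝ), L' t + 2 * b * L t ≤ c + a * (L t) ^ 2)
    (h0 : L 0 ≤ Real.sqrt (c / a) * (2 * ϱ - 1)) :
    ∀ t : ℝ, tϱ / Real.sqrt (a * c) ≤ t →
      L t ≤ Real.sqrt (c / a) * (1 / (2 * ϱ - 1)) := by
  -- basic facts about r
  have hq : (0:ℝ) ≤ ϱ ^ 2 - 1 := by nlinarith
  have hsq : Real.sqrt (ϱ ^ 2 - 1) ^ 2 = ϱ ^ 2 - 1 := Real.sq_sqrt hq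
  have hr1 : 1 < r := by
    have := Real.sqrt_nonneg (ϱ ^ 2 - 1); rw [hr]; linarith
  have hr0 : 0 < r := by linarith
  have hrr : r ^ 2 - 2 * ϱ * r + 1 = 0 := by rw [hr]; nlinarith [hsq]
  have hϱr : ϱ = (r ^ 2 + 1) / (2 * r) := by field_simp; linarith [hrr]
  have hϱ1 : 1 < 2 * ϱ - 1 := by linarith
  clear hr hsq hq hb
  -- basic facts about s = √(c/a)
  set s : ℝ := Real.sqrt (c / a) with hs_def
  have hs : 0 < s := Real.sqrt_pos.mpr (by positivity)
  have hs2 : s ^ 2 = c / a := Real.sq_sqrt (by positivity)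
  have hcas : c = a * s ^ 2 := by rw [hs2]; field_simp
  have has : Real.sqrt (a * c) = a * s := by
    rw [show a * c = a ^ 2 * (c / a) by field_simp, Real.sqrt_mul (by positivity),
      Real.sqrt_sq ha.le]
  have hbas : b = ϱ * (a * s) := by
    have hsac : (0:ℝ) < Real.sqrt (a * c) := Real.sqrt_pos.mpr (by positivity)
    rw [← has, ← hϱdef]
    field_simp
  clear hϱdef
  clear_value s
  -- key algebraic identities in r
  have heqN : s * (2 * ϱ - 1) - s / r = s * (r - 1) := by
    rw [hϱr]; field_simp; ring
  have heqD : s * r - s * (2 * ϱ - 1) = s * (r - 1) / r := by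
    rw [hϱr]; field_simp; ring
  have hNpos : 0 < s * (r - 1) := mul_pos hs (by linarith)
  have hDpos : 0 < s * (r - 1) / r := div_pos hNpos hr0
  -- Riccati factorization
  have hric : ∀ x : ℝ, c + a * x ^ 2 - 2 * b * x = a * (x - s / r) * (x - s * r) := by
    intro x
    rw [hcas, hbas, hϱr]; field_simp; ring
  -- continuity of L on Ici 0
  have hLcont : ContinuousOn L (Set.Ici 0) := fun t ht =>
    (hderiv t ht).continuousAt.continuousWithinAt
  -- Step 1: barrier L t ≤ s*(2ϱ-1)
  have hLN : ∀ t ∈ Set.Ici (0:ℝ), L t ≤ s * (2 * ϱ - 1) := by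
    intro t ht
    have h := image_le_of_deriv_right_lt_deriv_boundary (f := L) (f' := L') (a := 0) (b := t)
      (B := fun _ => s * (2 * ϱ - 1)) (B' := fun _ => 0)
      (hLcont.mono (Set.Icc_subset_Ici_self))
      (fun x hx => (hderiv x hx.1).hasDerivWithinAt)
      h0 (fun x => hasDerivAt_const x _) ?_
    · exact h ⟨ht, le_refl t⟩
    · intro x hx hLx
      have hdi := hDI x hx.1
      have hle : L' x ≤ c + a * (L x) ^ 2 - 2 * b * L x := by linarith
      rw [hric (L x), hLx] at hle
      have hneg : a * (s * (2 * ϱ - 1) - s / r) * (s * (2 * ϱ - 1) - s * r) < 0 := by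
        rw [heqN, show s * (2 * ϱ - 1) - s * r = -(s * (r - 1) / r) by linarith [heqD]]
        have h3 : 0 < a * (s * (r - 1)) * (s * (r - 1) / r) := by positivity
        have h4 : a * (s * (r - 1)) * -(s * (r - 1) / r)
            = -(a * (s * (r - 1)) * (s * (r - 1) / r)) := by ring
        linarith [h3, h4.le, h4.ge]
      linarith
  -- denominators positive
  have hden : ∀ t ∈ Set.Ici (0:ℝ), 0 < s * r - L t := by
    intro t ht
    have h1 := hLN t ht
    linarith [heqD, hDpos]
    -- Step 2: the monotone quantity g
  set μ : ℝ := a * s * (r - 1 / r) with hμ_def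
  have hrinv : 1 / r < 1 := by rw [div_lt_one hr0]; exact hr1
  have hμ : 0 < μ := by
    have h1 : 0 < r - 1 / r := by linarith
    exact mul_pos (mul_pos ha hs) h1
  clear_value μ
  set g : ℝ → ℝ := fun u => Real.exp (μ * u) * ((L u - s / r) / (s * r - L u)) with hg_def
  have hgderiv : ∀ x ∈ Set.Ioi (0:ℝ), HasDerivAt g
      (Real.exp (μ * x) * μ * ((L x - s / r) / (s * r - L x)) +
       Real.exp (μ * x) *
         ((L' x * (s * r - L x) - (L x - s / r) * -(L' x)) / (s * r - L x) ^ 2)) x := by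
    intro x hx
    have hx0 : x ∈ Set.Ici (0:ℝ) := Set.mem_Ici.mpr (le_of_lt (Set.mem_Ioi.mp hx))
    have hL := hderiv x hx0
    have hd := hden x hx0
    have h1 : HasDerivAt (fun u => Real.exp (μ * u)) (Real.exp (μ * x) * μ) x := by
      simpa using ((hasDerivAt_id x).const_mul μ).exp
    have hQ := (hL.sub_const (s / r)).div (hL.const_sub (s * r)) (ne_of_gt hd)
    exact h1.mul hQ
  have hg_nonpos : ∀ x ∈ Set.Ioi (0:ℝ), deriv g x ≤ 0 := by
    intro x hx
    have hx0 : x ∈ Set.Ici (0:ℝ) := Set.mem_Ici.mpr (le_of_lt (Set.mem_Ioi.mp hx))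
    rw [(hgderiv x hx).deriv]
    have hd := hden x hx0
    have hdi := hDI x hx0
    have hle : L' x ≤ a * (L x - s / r) * (L x - s * r) := by
      have := hric (L x); linarith
    have key : a * (L x - s / r) * (s * r - L x) + L' x ≤ 0 := by
      have hiden : a * (L x - s / r) * (L x - s * r)
          = -(a * (L x - s / r) * (s * r - L x)) := by ring
      linarith [hle, hiden.le, hiden.ge]
    have hsum : (s * r - L x) + (L x - s / r) = μ / a := by
      rw [hμ_def]; field_simp; ring
    have hE := aux_hE (Real.exp (μ * x)) (s * r - L x) (L x - s / r) (L' x) μ (ne_of_gt hd)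
    rw [hE]
    apply mul_nonpos_of_nonneg_of_nonpos (by positivity)
    rw [hsum]
    have hE2 := aux_hE2 μ a (L x - s / r) (s * r - L x) (L' x) (ne_of_gt ha)
    rw [hE2]
    exact mul_nonpos_of_nonneg_of_nonpos (by positivity) key
  have hganti : AntitoneOn g (Set.Ici 0) := by
    apply antitoneOn_of_deriv_nonpos (convex_Ici 0)
    · apply ContinuousOn.mul
      · exact (Real.continuous_exp.comp (continuous_const.mul continuous_id)).continuousOn
      · exact (hLcont.sub continuousOn_const).div (continuousOn_const.sub hLcont)
          (fun u hu => ne_of_gt (hden u hu))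
    · intro x hx
      rw [interior_Ici] at hx
      exact (hgderiv x hx).differentiableAt.differentiableWithinAt
    · intro x hx
      rw [interior_Ici] at hx
      exact hg_nonpos x hx
  clear_value g
  clear hgderiv hg_nonpos hcont hderiv hDI hric
  -- simplification of tϱ
  have hrm1 : (0:ℝ) < r - 1 := by linarith
  have hXpos : (0:ℝ) < r ^ 2 - r + 1 := by nlinarith
  have hnum : r + 1 - 2 * ϱ = (r - 1) / r := by rw [hϱr]; field_simp; ring
  have hden2 : 4 * ϱ * r * (ϱ - 1) + r + 1 - 2 * ϱ = (r - 1) * (r ^ 2 - r + 1) := by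
    rw [hϱr]; field_simp; ring
  have hcoef : 2 * ϱ - 1 - r = -((r - 1) / r) := by rw [hϱr]; field_simp; ring
  have hne1 : r - 1 ≠ 0 := ne_of_gt hrm1
  have hne2 : r ^ 2 - r + 1 ≠ 0 := ne_of_gt hXpos
  have hratio : (r - 1) / r / ((r - 1) * (r ^ 2 - r + 1)) = (r * (r ^ 2 - r + 1))⁻¹ := by
    field_simp [hne1, hne2, hr0.ne']
  have htϱ2 : tϱ = r / (r - 1) * Real.log (r * (r ^ 2 - r + 1)) := by
    rw [htϱ, hcoef, hnum, hden2, hratio, Real.log_inv]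
    generalize Real.log (r * (r ^ 2 - r + 1)) = LX
    have hne3 : (1:ℝ) - r ≠ 0 := sub_ne_zero_of_ne (by intro h; linarith)
    field_simp [hne3]
  have hlogr : 0 ≤ Real.log r := Real.log_nonneg hr1.le
  have hlogX : 2 * Real.log r ≤ Real.log (r * (r ^ 2 - r + 1)) := by
    rw [show (2:ℝ) * Real.log r = Real.log (r ^ 2) by rw [Real.log_pow]; norm_num]
    rw [Real.log_le_log_iff (by positivity) (by positivity)]
    nlinarith [sq_nonneg (r - 1), hr0]
  have hlogX0 : 0 ≤ Real.log (r * (r ^ 2 - r + 1)) := by linarith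
  have htϱ0 : 0 ≤ tϱ := by
    rw [htϱ2]
    exact mul_nonneg (by positivity) hlogX0
  -- final argument
  intro t htT
  have hT0 : 0 ≤ tϱ / Real.sqrt (a * c) := div_nonneg htϱ0 (Real.sqrt_nonneg _)
  have ht0 : (0:ℝ) ≤ t := le_trans hT0 htT
  have hμt : 4 * Real.log r ≤ μ * t := by
    have h1 : μ * (tϱ / Real.sqrt (a * c)) = (r + 1) * Real.log (r * (r ^ 2 - r + 1)) := by
      rw [has, htϱ2, hμ_def]
      field_simp
      ring
    have h2 : μ * (tϱ / Real.sqrt (a * c)) ≤ μ * t := mul_le_mul_of_nonneg_left htT hμ.le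
    have h3 : 0 ≤ (r - 1) * Real.log (r * (r ^ 2 - r + 1)) := mul_nonneg hrm1.le hlogX0
    have h4 : (r + 1) * Real.log (r * (r ^ 2 - r + 1))
        = 2 * Real.log (r * (r ^ 2 - r + 1)) + (r - 1) * Real.log (r * (r ^ 2 - r + 1)) := by
      ring
    linarith [h1, h2, h3, h4.le, h4.ge, hlogX]
  have hexp : r ^ 4 ≤ Real.exp (μ * t) := by
    rw [show r ^ 4 = Real.exp (4 * Real.log r) by
      rw [show (4:ℝ) * Real.log r = Real.log (r ^ 4) by rw [Real.log_pow]; norm_num]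
      rw [Real.exp_log (by positivity)]]
    exact Real.exp_le_exp.mpr hμt
  have hgt : g t ≤ g 0 := hganti Set.self_mem_Ici ht0 ht0
  have hg0 : g 0 ≤ r := by
    have hd0 := hden 0 Set.self_mem_Ici
    simp only [hg_def, mul_zero, Real.exp_zero, one_mul]
    rw [div_le_iff₀ hd0]
    have hid : (1 + r) * (s * (2 * ϱ - 1)) = r * (s * r) + s / r := by
      rw [hϱr]; field_simp; ring
    linarith [mul_le_mul_of_nonneg_left h0 (by linarith : (0:ℝ) ≤ 1 + r), hid]
  have hd := hden t ht0
  have hQt : (L t - s / r) / (s * r - L t) ≤ 1 / r ^ 3 := by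
    rcases le_or_gt ((L t - s / r) / (s * r - L t)) 0 with h | h
    · exact le_trans h (by positivity)
    · have h3 : Real.exp (μ * t) * ((L t - s / r) / (s * r - L t)) ≤ r := by
        have h5 := le_trans hgt hg0
        rw [hg_def] at h5
        simpa using h5
      have h4 := mul_le_mul_of_nonneg_right hexp h.le
      rw [le_div_iff₀ (by positivity : (0:ℝ) < r ^ 3)]
      apply le_of_mul_le_mul_right _ hr0
      linarith [h3, h4]
  rw [div_le_div_iff₀ hd (by positivity : (0:ℝ) < r ^ 3)] at hQt
  have hsr3 : s / r * r ^ 3 = s * r ^ 2 := by field_simp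
  rw [hϱr, show s * (1 / (2 * ((r ^ 2 + 1) / (2 * r)) - 1)) = s * r / (r ^ 2 - r + 1) by
    rw [show 2 * ((r ^ 2 + 1) / (2 * r)) - 1 = (r ^ 2 - r + 1) / r by
      field_simp; ring]
    rw [one_div_div]
    ring]
  rw [le_div_iff₀ hXpos]
  apply le_of_mul_le_mul_right _ (show (0:ℝ) < r + 1 by linarith)
  linarith [hQt, hsr3]
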